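/- (Kullback–Leibler risk difference identity, Lemma 2 of George et al. as used in Proposition 1) Let n, m ≥ 1, v₁, v₂ > 0 and v₀ = v₁v₂/(v₁+v₂). Let π : ℝ^{n×m} → [0,∞] be measurable with 0 < m_π(Z; v) < ∞ for every Z ∈ ℝ^{n×m} and every v > 0, and assume all the integrals below are finite. Then for every M ∈ ℝ^{n×m}, R_KL(M, p̂_I) − R_KL(M, p̂_π) = E_{Z∼N_{n,m}(M, v₀I_n, I_m)}[log m_π(Z; v₀)] − E_{Z∼N_{n,m}(M, v₁I_n, I_m)}[log m_π(Z; v₁)]. -/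

import Mathlib

open MeasureTheory ENNReal

/-- The density of the matrix-variate normal `N_{n,m}(M, v I_n, I_m)` at `X`, where
`ℝ^{n×m}` is identified with `ℝ^{nm}` and `‖·‖` is the (Frobenius) Euclidean norm. -/
noncomputable def pdens (n m : ℕ) (v : ℝ) (X M : EuclideanSpace ℝ (Fin n × Fin m)) : ℝ :=
  (2 * Real.pi * v) ^ (-((n : ℝ) * m) / 2) * Real.exp (-‖X - M‖ ^ 2 / (2 * v))

/-- The marginal `m_π(Z; v) = ∫ p_v(Z|M) π(M) dM` of a prior `π`. -/
noncomputable def marg (n m : ℕ) (π : EuclideanSpace ℝ (Fin n × Fin m) → ℝ≥0∞) (v : ℝ)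
    (Z : EuclideanSpace ℝ (Fin n × Fin m)) : ℝ≥0∞ :=
  ∫⁻ M, ENNReal.ofReal (pdens n m v Z M) * π M

/-- The Bayesian predictive density based on the prior `π`. -/
noncomputable def predPi (n m : ℕ) (π : EuclideanSpace ℝ (Fin n × Fin m) → ℝ≥0∞)
    (v₁ v₂ : ℝ) (Y Yt : EuclideanSpace ℝ (Fin n × Fin m)) : ℝ :=
  (∫⁻ M, ENNReal.ofReal (pdens n m v₂ Yt M * pdens n m v₁ Y M) * π M).toReal /
    (marg n m π v₁ Y).toReal

/-- The predictive density based on the uniform prior: `p̂_I(Ỹ|Y) = p_{v₁+v₂}(Ỹ|Y)`. -/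
noncomputable def predI (n m : ℕ) (v₁ v₂ : ℝ)
    (Y Yt : EuclideanSpace ℝ (Fin n × Fin m)) : ℝ :=
  pdens n m (v₁ + v₂) Yt Y

/-- The Kullback–Leibler risk of a predictive density `p̂(·|·)` at the parameter `M`. -/
noncomputable def RKL (n m : ℕ) (v₁ v₂ : ℝ) (M : EuclideanSpace ℝ (Fin n × Fin m))
    (phat : EuclideanSpace ℝ (Fin n × Fin m) → EuclideanSpace ℝ (Fin n × Fin m) → ℝ) : ℝ :=
  ∫ p : EuclideanSpace ℝ (Fin n × Fin m) × EuclideanSpace ℝ (Fin n × Fin m),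
    pdens n m v₁ p.1 M * pdens n m v₂ p.2 M *
      Real.log (pdens n m v₂ p.2 M / phat p.1 p.2)

section aux
variable {n m : ℕ}

lemma pdens_pos {v : ℝ} (hv : 0 < v) (X M : EuclideanSpace ℝ (Fin n × Fin m)) :
    0 < pdens n m v X M :=
  mul_pos (Real.rpow_pos_of_pos (by positivity) _) (Real.exp_pos _)

lemma pdens_eq_gauss (v : ℝ) (X M : EuclideanSpace ℝ (Fin n × Fin m)) :
    pdens n m v X M
      = (2 * Real.pi * v) ^ (-((n : ℝ) * m) / 2) * Real.exp (-(1 / (2 * v)) * ‖X - M‖ ^ 2) := by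
  rw [pdens]
  ring_nf

lemma continuous_pdens_right (v : ℝ) (Z : EuclideanSpace ℝ (Fin n × Fin m)) :
    Continuous (fun M : EuclideanSpace ℝ (Fin n × Fin m) => pdens n m v Z M) := by
  unfold pdens; fun_prop

lemma integrable_gauss {v : ℝ} (hv : 0 < v) (M : EuclideanSpace ℝ (Fin n × Fin m)) :
    Integrable (fun X : EuclideanSpace ℝ (Fin n × Fin m) =>
      Real.exp (-(1 / (2 * v)) * ‖X - M‖ ^ 2)) := by
  have h : Integrable (fun X : EuclideanSpace ℝ (Fin n × Fin m) =>
      Real.exp (-(1 / (2 * v)) * ‖X‖ ^ 2)) := by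
    have h0 := GaussianFourier.integrable_cexp_neg_mul_sq_norm_add
      (V := EuclideanSpace ℝ (Fin n × Fin m)) (b := ((1 : ℂ) / (2 * v)))
      (by simp; positivity) 0 0
    have h1 := h0.re
    refine h1.congr (Filter.Eventually.of_forall fun X => ?_)
    have heq : (-((1:ℂ)/(2*(v:ℂ))) * (‖X‖:ℂ)^2
        + 0 * ((inner ℝ (0 : EuclideanSpace ℝ (Fin n × Fin m)) X : ℝ) : ℂ))
        = ((-(1/(2*v)) * ‖X‖^2 : ℝ) : ℂ) := by push_cast; ring
    show RCLike.re (Complex.exp _) = _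
    rw [heq, ← Complex.ofReal_exp]
    exact Complex.ofReal_re _
  exact h.comp_sub_right M

lemma integral_gauss {v : ℝ} (hv : 0 < v) (M : EuclideanSpace ℝ (Fin n × Fin m)) :
    ∫ X : EuclideanSpace ℝ (Fin n × Fin m), Real.exp (-(1 / (2 * v)) * ‖X - M‖ ^ 2)
      = (2 * Real.pi * v) ^ (((n : ℝ) * m) / 2) := by
  rw [integral_sub_right_eq_self (fun X : EuclideanSpace ℝ (Fin n × Fin m) =>
      Real.exp (-(1 / (2 * v)) * ‖X‖ ^ 2)) M]
  rw [GaussianFourier.integral_rexp_neg_mul_sq_norm (by positivity)]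
  rw [finrank_euclideanSpace]
  rw [show Real.pi / (1 / (2 * v)) = 2 * Real.pi * v by field_simp]
  congr 1
  simp [Fintype.card_prod]

end aux

section aux2
variable {n m : ℕ}

local notation "E" => EuclideanSpace ℝ (Fin n × Fin m)

lemma integrable_pdens {v : ℝ} (hv : 0 < v) (M : E) :
    Integrable (fun X : E => pdens n m v X M) := by
  simp_rw [pdens_eq_gauss]
  exact (integrable_gauss hv M).const_mul _

lemma integral_pdens {v : ℝ} (hv : 0 < v) (M : E) :
    ∫ X : E, pdens n m v X M = 1 := by
  simp_rw [pdens_eq_gauss]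
  rw [integral_const_mul, integral_gauss hv M, ← Real.rpow_add (by positivity)]
  rw [show -((n : ℝ) * m) / 2 + ((n : ℝ) * m) / 2 = 0 by ring, Real.rpow_zero]

lemma key_inner {v₁ v₂ : ℝ} (hv₁ : 0 < v₁) (hv₂ : 0 < v₂) (a b : E) :
    ‖b‖ ^ 2 / (2 * v₂) + ‖a‖ ^ 2 / (2 * v₁)
      = ‖b - a‖ ^ 2 / (2 * (v₁ + v₂))
        + ‖(1 - v₁ / (v₁ + v₂)) • a + (v₁ / (v₁ + v₂)) • b‖ ^ 2
            / (2 * (v₁ * v₂ / (v₁ + v₂))) := by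
  have hs : (0:ℝ) < v₁ + v₂ := by linarith
  have h1 : ‖b - a‖ ^ 2 = ‖b‖ ^ 2 - 2 * (inner ℝ a b : ℝ) + ‖a‖ ^ 2 := by
    rw [norm_sub_sq_real, real_inner_comm]
  have h2 : ‖(1 - v₁ / (v₁ + v₂)) • a + (v₁ / (v₁ + v₂)) • b‖ ^ 2
      = (1 - v₁ / (v₁ + v₂)) ^ 2 * ‖a‖ ^ 2
        + 2 * (1 - v₁ / (v₁ + v₂)) * (v₁ / (v₁ + v₂)) * (inner ℝ a b : ℝ)
        + (v₁ / (v₁ + v₂)) ^ 2 * ‖b‖ ^ 2 := by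
    rw [norm_add_sq_real, norm_smul, norm_smul, real_inner_smul_left, real_inner_smul_right]
    rw [Real.norm_eq_abs, Real.norm_eq_abs, mul_pow, mul_pow, sq_abs, sq_abs]
    ring
  rw [h1, h2]
  field_simp
  ring

lemma pdens_factor {v₁ v₂ : ℝ} (hv₁ : 0 < v₁) (hv₂ : 0 < v₂) (Y Yt M : E) :
    pdens n m v₂ Yt M * pdens n m v₁ Y M
      = pdens n m (v₁ + v₂) Yt Y *
          pdens n m (v₁ * v₂ / (v₁ + v₂))
            ((1 - v₁ / (v₁ + v₂)) • Y + (v₁ / (v₁ + v₂)) • Yt) M := by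
  have hs : (0:ℝ) < v₁ + v₂ := by linarith
  have hv₀ : (0:ℝ) < v₁ * v₂ / (v₁ + v₂) := by positivity
  have hc : (1 - v₁ / (v₁ + v₂)) + v₁ / (v₁ + v₂) = 1 := by ring
  have hW : (1 - v₁ / (v₁ + v₂)) • Y + (v₁ / (v₁ + v₂)) • Yt - M
      = (1 - v₁ / (v₁ + v₂)) • (Y - M) + (v₁ / (v₁ + v₂)) • (Yt - M) := by
    have : (1 - v₁ / (v₁ + v₂)) • (Y - M) + (v₁ / (v₁ + v₂)) • (Yt - M)
        = (1 - v₁ / (v₁ + v₂)) • Y + (v₁ / (v₁ + v₂)) • Yt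
          - ((1 - v₁ / (v₁ + v₂)) + v₁ / (v₁ + v₂)) • M := by module
    rw [this, hc, one_smul]
  unfold pdens
  rw [hW]
  have hconst : (2 * Real.pi * v₂) ^ (-((n : ℝ) * m) / 2)
      * (2 * Real.pi * v₁) ^ (-((n : ℝ) * m) / 2)
      = (2 * Real.pi * (v₁ + v₂)) ^ (-((n : ℝ) * m) / 2)
        * (2 * Real.pi * (v₁ * v₂ / (v₁ + v₂))) ^ (-((n : ℝ) * m) / 2) := by
    rw [← Real.mul_rpow (by positivity) (by positivity),
        ← Real.mul_rpow (by positivity) (by positivity)]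
    congr 1
    field_simp
  have hexp : -‖Yt - M‖ ^ 2 / (2 * v₂) + -‖Y - M‖ ^ 2 / (2 * v₁)
      = -‖Yt - Y‖ ^ 2 / (2 * (v₁ + v₂))
        + -‖(1 - v₁ / (v₁ + v₂)) • (Y - M) + (v₁ / (v₁ + v₂)) • (Yt - M)‖ ^ 2
            / (2 * (v₁ * v₂ / (v₁ + v₂))) := by
    have := key_inner hv₁ hv₂ (Y - M) (Yt - M)
    have hd : Yt - M - (Y - M) = Yt - Y := by module
    rw [hd] at this
    rw [show ∀ x y : ℝ, -x / (2 * v₂) + -y / (2 * v₁) = -(x / (2 * v₂) + y / (2 * v₁))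
      from fun x y => by ring]
    rw [this]; ring
  calc (2 * Real.pi * v₂) ^ (-((n : ℝ) * m) / 2) * Real.exp (-‖Yt - M‖ ^ 2 / (2 * v₂))
      * ((2 * Real.pi * v₁) ^ (-((n : ℝ) * m) / 2) * Real.exp (-‖Y - M‖ ^ 2 / (2 * v₁)))
      = ((2 * Real.pi * v₂) ^ (-((n : ℝ) * m) / 2) * (2 * Real.pi * v₁) ^ (-((n : ℝ) * m) / 2))
        * Real.exp (-‖Yt - M‖ ^ 2 / (2 * v₂) + -‖Y - M‖ ^ 2 / (2 * v₁)) := by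
        rw [Real.exp_add]; ring
    _ = _ := by
        rw [hconst, hexp, Real.exp_add]; ring

end aux2

section shear
variable {n m : ℕ}
local notation "E" => EuclideanSpace ℝ (Fin n × Fin m)

noncomputable def shearH (n m : ℕ) (c : ℝ) :
    (EuclideanSpace ℝ (Fin n × Fin m) × EuclideanSpace ℝ (Fin n × Fin m)) ≃ₜ
      (EuclideanSpace ℝ (Fin n × Fin m) × EuclideanSpace ℝ (Fin n × Fin m)) where
  toFun p := (p.1 - c • p.2, p.1 + (1 - c) • p.2)
  invFun q := ((1 - c) • q.1 + c • q.2, q.2 - q.1)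
  left_inv p := by
    refine Prod.ext ?_ ?_
    · show (1 - c) • (p.1 - c • p.2) + c • (p.1 + (1 - c) • p.2) = p.1
      module
    · show (p.1 + (1 - c) • p.2) - (p.1 - c • p.2) = p.2
      module
  right_inv q := by
    refine Prod.ext ?_ ?_
    · show ((1 - c) • q.1 + c • q.2) - c • (q.2 - q.1) = q.1
      module
    · show ((1 - c) • q.1 + c • q.2) + (1 - c) • (q.2 - q.1) = q.2
      module
  continuous_toFun := by fun_prop
  continuous_invFun := by fun_prop

lemma shearH_mp (c : ℝ) :
    MeasurePreserving (shearH n m c) (volume : Measure (E × E)) volume := by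
  have hswap : MeasurePreserving (Prod.swap : E × E → E × E) volume volume := by
    rw [Measure.volume_eq_prod]
    exact Measure.measurePreserving_swap
  have h1' : MeasurePreserving (fun p : E × E => (p.1, p.2 - c • p.1)) volume volume := by
    rw [Measure.volume_eq_prod]
    exact (MeasurePreserving.id volume).skew_product
      (by fun_prop)
      (Filter.Eventually.of_forall fun a =>
        (measurePreserving_sub_right volume (c • a)).map_eq)
  have h1 : MeasurePreserving (fun p : E × E => (p.1 - c • p.2, p.2)) volume volume := by
    have := hswap.comp (h1'.comp hswap)
    have heq : (Prod.swap ∘ (fun p : E × E => (p.1, p.2 - c • p.1)) ∘ Prod.swap)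
        = fun p : E × E => (p.1 - c • p.2, p.2) := by
      funext p; rfl
    rwa [heq] at this
  have h2 : MeasurePreserving (fun p : E × E => (p.1, p.2 + p.1)) volume volume := by
    rw [Measure.volume_eq_prod]
    exact (MeasurePreserving.id volume).skew_product
      (by fun_prop)
      (Filter.Eventually.of_forall fun a =>
        (measurePreserving_add_right volume a).map_eq)
  have hcomp := h2.comp h1
  have heq : ((fun p : E × E => (p.1, p.2 + p.1)) ∘ (fun p : E × E => (p.1 - c • p.2, p.2)))
      = (shearH n m c : (E × E) → (E × E)) := by
    funext p
    refine Prod.ext rfl ?_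
    show p.2 + (p.1 - c • p.2) = p.1 + (1 - c) • p.2
    module
  rwa [heq] at hcomp

end shear

section predpi
variable {n m : ℕ}
local notation "E" => EuclideanSpace ℝ (Fin n × Fin m)

lemma predPi_eq {v₁ v₂ : ℝ} (hv₁ : 0 < v₁) (hv₂ : 0 < v₂)
    (π : E → ℝ≥0∞) (hmeas : Measurable π) (Y Yt : E) :
    predPi n m π v₁ v₂ Y Yt
      = pdens n m (v₁ + v₂) Yt Y
        * (marg n m π (v₁ * v₂ / (v₁ + v₂))
            ((1 - v₁ / (v₁ + v₂)) • Y + (v₁ / (v₁ + v₂)) • Yt)).toReal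
        / (marg n m π v₁ Y).toReal := by
  have hs : (0:ℝ) < v₁ + v₂ := by linarith
  rw [predPi]
  congr 1
  have hnum : (∫⁻ M, ENNReal.ofReal (pdens n m v₂ Yt M * pdens n m v₁ Y M) * π M)
      = ENNReal.ofReal (pdens n m (v₁ + v₂) Yt Y)
        * marg n m π (v₁ * v₂ / (v₁ + v₂))
            ((1 - v₁ / (v₁ + v₂)) • Y + (v₁ / (v₁ + v₂)) • Yt) := by
    rw [marg, ← lintegral_const_mul _ (f := fun M =>
        ENNReal.ofReal (pdens n m (v₁ * v₂ / (v₁ + v₂))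
          ((1 - v₁ / (v₁ + v₂)) • Y + (v₁ / (v₁ + v₂)) • Yt) M) * π M)
      (((continuous_pdens_right _ _).measurable.ennreal_ofReal).mul hmeas)]
    refine lintegral_congr fun M => ?_
    rw [pdens_factor hv₁ hv₂, ENNReal.ofReal_mul (le_of_lt (pdens_pos hs _ _)), mul_assoc]
  rw [hnum, ENNReal.toReal_mul, ENNReal.toReal_ofReal (le_of_lt (pdens_pos hs _ _))]

end predpi

theorem stmt11 (n m : ℕ) (hn : 1 ≤ n) (hm : 1 ≤ m)
    (v₁ v₂ v₀ : ℝ) (hv₁ : 0 < v₁) (hv₂ : 0 < v₂) (hv₀ : v₀ = v₁ * v₂ / (v₁ + v₂))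
    (π : EuclideanSpace ℝ (Fin n × Fin m) → ℝ≥0∞) (hmeas : Measurable π)
    (hmarg : ∀ (Z : EuclideanSpace ℝ (Fin n × Fin m)) (v : ℝ), 0 < v →
      0 < marg n m π v Z ∧ marg n m π v Z ≠ ⊤)
    (M : EuclideanSpace ℝ (Fin n × Fin m))
    (hintI : Integrable (fun p : EuclideanSpace ℝ (Fin n × Fin m) × EuclideanSpace ℝ (Fin n × Fin m) =>
      pdens n m v₁ p.1 M * pdens n m v₂ p.2 M *
        Real.log (pdens n m v₂ p.2 M / predI n m v₁ v₂ p.1 p.2)))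
    (hintπ : Integrable (fun p : EuclideanSpace ℝ (Fin n × Fin m) × EuclideanSpace ℝ (Fin n × Fin m) =>
      pdens n m v₁ p.1 M * pdens n m v₂ p.2 M *
        Real.log (pdens n m v₂ p.2 M / predPi n m π v₁ v₂ p.1 p.2)))
    (hint0 : Integrable (fun Z : EuclideanSpace ℝ (Fin n × Fin m) =>
      pdens n m v₀ Z M * Real.log (marg n m π v₀ Z).toReal))
    (hint1 : Integrable (fun Z : EuclideanSpace ℝ (Fin n × Fin m) =>
      pdens n m v₁ Z M * Real.log (marg n m π v₁ Z).toReal)) :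
    RKL n m v₁ v₂ M (predI n m v₁ v₂) - RKL n m v₁ v₂ M (predPi n m π v₁ v₂) =
      (∫ Z, pdens n m v₀ Z M * Real.log (marg n m π v₀ Z).toReal) -
        ∫ Z, pdens n m v₁ Z M * Real.log (marg n m π v₁ Z).toReal := by
  have hs : (0:ℝ) < v₁ + v₂ := by linarith
  have hv₀' : 0 < v₀ := by rw [hv₀]; positivity
  set c : ℝ := v₁ / (v₁ + v₂) with hc
  set W : (EuclideanSpace ℝ (Fin n × Fin m) × EuclideanSpace ℝ (Fin n × Fin m)) →
      EuclideanSpace ℝ (Fin n × Fin m) := fun p => (1 - c) • p.1 + c • p.2 with hWdef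
  -- the two "gain" functions
  set gW : (EuclideanSpace ℝ (Fin n × Fin m) × EuclideanSpace ℝ (Fin n × Fin m)) → ℝ :=
    fun p => pdens n m v₁ p.1 M * pdens n m v₂ p.2 M *
      Real.log (marg n m π v₀ (W p)).toReal with hgWdef
  set gY : (EuclideanSpace ℝ (Fin n × Fin m) × EuclideanSpace ℝ (Fin n × Fin m)) → ℝ :=
    fun p => pdens n m v₁ p.1 M * pdens n m v₂ p.2 M *
      Real.log (marg n m π v₁ p.1).toReal with hgYdef
  have hpoint : ∀ p : EuclideanSpace ℝ (Fin n × Fin m) × EuclideanSpace ℝ (Fin n × Fin m),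
      pdens n m v₁ p.1 M * pdens n m v₂ p.2 M *
        Real.log (pdens n m v₂ p.2 M / predI n m v₁ v₂ p.1 p.2)
      - pdens n m v₁ p.1 M * pdens n m v₂ p.2 M *
        Real.log (pdens n m v₂ p.2 M / predPi n m π v₁ v₂ p.1 p.2)
      = gW p - gY p := by
    rintro ⟨Y, Yt⟩
    have h2 : 0 < pdens n m v₂ Yt M := pdens_pos hv₂ _ _
    have hIp : 0 < pdens n m (v₁ + v₂) Yt Y := pdens_pos hs _ _
    have hA : 0 < (marg n m π v₀ (W (Y, Yt))).toReal :=
      ENNReal.toReal_pos (hmarg _ v₀ hv₀').1.ne' (hmarg _ v₀ hv₀').2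
    have hB : 0 < (marg n m π v₁ Y).toReal :=
      ENNReal.toReal_pos (hmarg _ v₁ hv₁).1.ne' (hmarg _ v₁ hv₁).2
    have hPi : predPi n m π v₁ v₂ Y Yt
        = pdens n m (v₁ + v₂) Yt Y * (marg n m π v₀ (W (Y, Yt))).toReal
          / (marg n m π v₁ Y).toReal := by
      rw [predPi_eq hv₁ hv₂ π hmeas, ← hv₀, ← hc]
    have h3 : 0 < pdens n m (v₁ + v₂) Yt Y * (marg n m π v₀ (W (Y, Yt))).toReal
        / (marg n m π v₁ Y).toReal := by positivity
    rw [← mul_sub, ← mul_sub]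
    congr 1
    rw [predI, hPi]
    rw [Real.log_div h2.ne' hIp.ne', Real.log_div h2.ne' h3.ne',
      Real.log_div (mul_pos hIp hA).ne' hB.ne', Real.log_mul hIp.ne' hA.ne']
    ring
  unfold RKL
  rw [← integral_sub hintI hintπ]
  rw [show (fun p : EuclideanSpace ℝ (Fin n × Fin m) × EuclideanSpace ℝ (Fin n × Fin m) =>
      pdens n m v₁ p.1 M * pdens n m v₂ p.2 M *
        Real.log (pdens n m v₂ p.2 M / predI n m v₁ v₂ p.1 p.2)
      - pdens n m v₁ p.1 M * pdens n m v₂ p.2 M *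
        Real.log (pdens n m v₂ p.2 M / predPi n m π v₁ v₂ p.1 p.2))
    = fun p => gW p - gY p from funext hpoint]
  -- integrability and value of the gY part
  have hgYint : Integrable gY := by
    have h := Integrable.mul_prod (μ := (volume : Measure (EuclideanSpace ℝ (Fin n × Fin m))))
      (ν := (volume : Measure (EuclideanSpace ℝ (Fin n × Fin m)))) hint1 (integrable_pdens hv₂ M)
    rw [← Measure.volume_eq_prod] at h
    exact h.congr (Filter.Eventually.of_forall fun p => by simp only [hgYdef]; ring)
  have hgYval : ∫ p, gY p = ∫ Z, pdens n m v₁ Z M * Real.log (marg n m π v₁ Z).toReal := by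
    have : ∫ p, gY p = ∫ p : EuclideanSpace ℝ (Fin n × Fin m) × EuclideanSpace ℝ (Fin n × Fin m),
        (fun Z => pdens n m v₁ Z M * Real.log (marg n m π v₁ Z).toReal) p.1
          * (fun Z => pdens n m v₂ Z M) p.2 :=
      integral_congr_ae (Filter.Eventually.of_forall fun p => by simp only [hgYdef]; ring)
    rw [this, Measure.volume_eq_prod]
    rw [MeasureTheory.integral_prod_mul (μ := volume) (ν := volume)
      (fun Z => pdens n m v₁ Z M * Real.log (marg n m π v₁ Z).toReal)
      (fun Z => pdens n m v₂ Z M)]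
    rw [integral_pdens hv₂ M, mul_one]
  -- the shear
  have hmp := shearH_mp (n := n) (m := m) c
  have hemb : MeasurableEmbedding
      (shearH n m c : (EuclideanSpace ℝ (Fin n × Fin m) × EuclideanSpace ℝ (Fin n × Fin m)) →
        (EuclideanSpace ℝ (Fin n × Fin m) × EuclideanSpace ℝ (Fin n × Fin m))) :=
    (shearH n m c).measurableEmbedding
  have hcompW : ∀ q : EuclideanSpace ℝ (Fin n × Fin m) × EuclideanSpace ℝ (Fin n × Fin m),
      gW (shearH n m c q)
        = (fun Z => pdens n m v₀ Z M * Real.log (marg n m π v₀ Z).toReal) q.1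
          * (fun Z => pdens n m (v₁ + v₂) Z 0) q.2 := by
    rintro ⟨U, D⟩
    have hWU : W (U - c • D, U + (1 - c) • D) = U := by
      show (1 - c) • (U - c • D) + c • (U + (1 - c) • D) = U
      module
    have hfac := pdens_factor (n := n) (m := m) hv₁ hv₂ (U - c • D) (U + (1 - c) • D) M
    rw [← hc, ← hv₀] at hfac
    have hU' : (1 - c) • (U - c • D) + c • (U + (1 - c) • D) = U := by module
    rw [hU'] at hfac
    have hdiff : pdens n m (v₁ + v₂) (U + (1 - c) • D) (U - c • D)
        = pdens n m (v₁ + v₂) D 0 := by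
      unfold pdens
      rw [show (U + (1 - c) • D) - (U - c • D) = D - 0 by module]
    rw [hdiff] at hfac
    show pdens n m v₁ (U - c • D) M * pdens n m v₂ (U + (1 - c) • D) M *
      Real.log (marg n m π v₀ (W (U - c • D, U + (1 - c) • D))).toReal = _
    rw [hWU, mul_comm (pdens n m v₁ (U - c • D) M) (pdens n m v₂ (U + (1 - c) • D) M), hfac]
    ring
  have hgWint : Integrable gW := by
    rw [← hmp.integrable_comp_emb hemb]
    have h := Integrable.mul_prod (μ := (volume : Measure (EuclideanSpace ℝ (Fin n × Fin m))))
      (ν := (volume : Measure (EuclideanSpace ℝ (Fin n × Fin m)))) hint0 (integrable_pdens hs 0)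
    rw [← Measure.volume_eq_prod] at h
    exact h.congr (Filter.Eventually.of_forall fun q => (hcompW q).symm)
  have hgWval : ∫ p, gW p = ∫ Z, pdens n m v₀ Z M * Real.log (marg n m π v₀ Z).toReal := by
    rw [← hmp.integral_comp hemb gW]
    rw [integral_congr_ae (Filter.Eventually.of_forall hcompW)]
    rw [Measure.volume_eq_prod]
    rw [MeasureTheory.integral_prod_mul (μ := volume) (ν := volume)
      (fun Z => pdens n m v₀ Z M * Real.log (marg n m π v₀ Z).toReal)
      (fun Z => pdens n m (v₁ + v₂) Z 0)]
    rw [integral_pdens hs 0, mul_one]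
  rw [integral_sub hgWint hgYint, hgWval, hgYval]
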